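/- Let F be a field, n, m ≥ 1, and let P be a monic polynomial of degree m with coefficients in the matrix algebra M(n, F) (equivalently, an n×n matrix with polynomial entries whose leading term is xᵐ·I). Suppose the determinant of P, as a polynomial in F[X] of degree mn, has mn distinct roots in F. Then there exist matrices C₁, …, C_m ∈ M(n, F) such that P(x) = (x·I − C₁)·(x·I − C₂)⋯(x·I − C_m) for all x ∈ F (an identity of matrix polynomials). -/

import Mathlib

open Polynomial

section AuxStmt12

open Matrix


private lemma aux_pow_sub {R : Type*} [Ring R] (c : R) (r : ℕ) :
    ∃ q : R[X], X ^ r - C c ^ r = q * (X - C c) := by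
  induction r with
  | zero => exact ⟨0, by simp⟩
  | succ r ih =>
    obtain ⟨q, hq⟩ := ih
    refine ⟨X ^ r + q * C c, ?_⟩
    have hcomm : (X - C c) * C c = C c * (X - C c) := by
      simp [sub_mul, mul_sub, X_mul_C]
    calc X ^ (r+1) - C c ^ (r+1)
        = X ^ r * (X - C c) + (X ^ r - C c ^ r) * C c := by
          rw [pow_succ, pow_succ]; noncomm_ring
      _ = X ^ r * (X - C c) + q * ((X - C c) * C c) := by rw [hq, mul_assoc]
      _ = (X ^ r + q * C c) * (X - C c) := by rw [hcomm, add_mul, mul_assoc]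

private lemma aux_right_div {R : Type*} [Ring R] (p : R[X]) (c : R) :
    ∃ q : R[X], p = q * (X - C c) + C (p.sum fun r a => a * c ^ r) := by
  induction p using Polynomial.induction_on' with
  | add p1 p2 h1 h2 =>
    obtain ⟨q1, hq1⟩ := h1
    obtain ⟨q2, hq2⟩ := h2
    refine ⟨q1 + q2, ?_⟩
    rw [Polynomial.sum_add_index p1 p2 _ (fun r => by simp) (fun r a b => by rw [add_mul])]
    rw [C_add]
    calc p1 + p2 = (q1 * (X - C c) + C (p1.sum fun r a => a * c ^ r))
        + (q2 * (X - C c) + C (p2.sum fun r a => a * c ^ r)) := by rw [← hq1, ← hq2]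
      _ = _ := by noncomm_ring
  | monomial r a =>
    obtain ⟨q, hq⟩ := aux_pow_sub c r
    refine ⟨C a * q, ?_⟩
    rw [Polynomial.sum_monomial_index a _ (by simp)]
    rw [← Polynomial.C_mul_X_pow_eq_monomial]
    have : C (a * c ^ r) = C a * C c ^ r := by rw [C_mul, C_pow]
    rw [this, mul_assoc, ← hq]
    noncomm_ring


private lemma aux_det_monic {F : Type*} [Field F] {k d : ℕ}
    (N : Matrix (Fin k) (Fin k) F[X])
    (hdeg : ∀ i j, (N i j).natDegree ≤ d)
    (hlead : ∀ i j, (N i j).coeff d = if i = j then 1 else 0) :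
    N.det.Monic ∧ N.det.natDegree = d * k := by
  have hdiag : ∀ i, (N i i).Monic ∧ (N i i).natDegree = d := by
    intro i
    have h1 : (N i i).coeff d = 1 := by simpa using hlead i i
    have hdd : (N i i).natDegree = d :=
      le_antisymm (hdeg i i) (Polynomial.le_natDegree_of_ne_zero (by simp [h1]))
    exact ⟨by rw [Polynomial.Monic, Polynomial.leadingCoeff, hdd, h1], hdd⟩
  have hterm_deg : ∀ σ : Equiv.Perm (Fin k), (∏ i, N (σ i) i).natDegree ≤ d * k := by
    intro σ
    calc (∏ i, N (σ i) i).natDegree ≤ ∑ i, (N (σ i) i).natDegree :=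
          Polynomial.natDegree_prod_le _ _
      _ ≤ Finset.univ.card • d := Finset.sum_le_card_nsmul _ _ d (fun i _ => hdeg _ _)
      _ = d * k := by simp [Finset.card_univ, mul_comm]
  have hterm_coeff : ∀ σ : Equiv.Perm (Fin k), σ ≠ 1 →
      (∏ i, N (σ i) i).coeff (d * k) = 0 := by
    intro σ hσ
    obtain ⟨i₀, hi₀⟩ : ∃ i, σ i ≠ i := by
      by_contra h
      push_neg at h
      exact hσ (Equiv.ext h)
    have hc0 : (N (σ i₀) i₀).coeff d = 0 := by simpa [hi₀] using hlead (σ i₀) i₀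
    by_cases hz : N (σ i₀) i₀ = 0
    · rw [show (∏ i, N (σ i) i) = 0 from Finset.prod_eq_zero (Finset.mem_univ i₀) hz,
        Polynomial.coeff_zero]
    · have hlt : (N (σ i₀) i₀).natDegree < d := by
        rcases lt_or_eq_of_le (hdeg (σ i₀) i₀) with h | h
        · exact h
        · exfalso
          apply hz
          have := Polynomial.coeff_natDegree (p := N (σ i₀) i₀)
          rw [h, hc0] at this
          exact Polynomial.leadingCoeff_eq_zero.mp this.symm
      have hk1 : 1 ≤ k := Nat.pos_of_ne_zero (fun h => by subst h; exact i₀.elim0)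
      apply Polynomial.coeff_eq_zero_of_natDegree_lt
      calc (∏ i, N (σ i) i).natDegree ≤ ∑ i, (N (σ i) i).natDegree :=
            Polynomial.natDegree_prod_le _ _
        _ = (N (σ i₀) i₀).natDegree + ∑ i ∈ Finset.univ.erase i₀, (N (σ i) i).natDegree :=
            (Finset.add_sum_erase _ _ (Finset.mem_univ i₀)).symm
        _ ≤ (N (σ i₀) i₀).natDegree + (Finset.univ.erase i₀).card • d := by
            have := Finset.sum_le_card_nsmul (Finset.univ.erase i₀)
              (fun i => (N (σ i) i).natDegree) d (fun i _ => hdeg _ _)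
            omega
        _ < d * k := by
            have hcard : (Finset.univ.erase i₀).card = k - 1 := by
              rw [Finset.card_erase_of_mem (Finset.mem_univ i₀)]
              simp [Finset.card_univ]
            rw [hcard]
            have h2 : (k - 1) • d = (k - 1) * d := rfl
            rw [h2]
            have hd1 : 1 ≤ d := Nat.one_le_iff_ne_zero.mpr (by rintro rfl; omega)
            have h3 : (k - 1) * d + d = d * k := by
              rw [mul_comm d k]
              cases k with
              | zero => omega
              | succ k' => simp [Nat.succ_sub_one, Nat.succ_mul]
            omega
  have hid : (∏ i, N i i).coeff (d * k) = 1 := by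
    have hmon : (∏ i, N i i).Monic := Polynomial.monic_prod_of_monic _ _ (fun i _ => (hdiag i).1)
    have hdeg' : (∏ i, N i i).natDegree = d * k := by
      rw [Polynomial.natDegree_prod_of_monic _ _ (fun i _ => (hdiag i).1)]
      simp [(hdiag _).2, Finset.card_univ, mul_comm]
    rw [← hdeg', Polynomial.coeff_natDegree]
    exact hmon
  have hdet_coeff : N.det.coeff (d * k) = 1 := by
    rw [Matrix.det_apply', Polynomial.finset_sum_coeff]
    rw [Finset.sum_eq_single_of_mem (1 : Equiv.Perm (Fin k)) (Finset.mem_univ _)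
      (fun σ _ hσ => by
        rw [← Polynomial.C_eq_intCast, Polynomial.coeff_C_mul, hterm_coeff σ hσ, mul_zero])]
    simpa using hid
  have hdet_deg_le : N.det.natDegree ≤ d * k := by
    rw [Matrix.det_apply']
    apply Polynomial.natDegree_sum_le_of_forall_le
    intro σ _
    calc (((Equiv.Perm.sign σ : ℤ) : F[X]) * ∏ i, N (σ i) i).natDegree
        ≤ ((Equiv.Perm.sign σ : ℤ) : F[X]).natDegree + (∏ i, N (σ i) i).natDegree :=
          Polynomial.natDegree_mul_le
      _ ≤ d * k := by rw [Polynomial.natDegree_intCast]; simpa using hterm_deg σ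
  have hdet_deg : N.det.natDegree = d * k :=
    le_antisymm hdet_deg_le (Polynomial.le_natDegree_of_ne_zero (by simp [hdet_coeff]))
  exact ⟨by rw [Polynomial.Monic, Polynomial.leadingCoeff, hdet_deg, hdet_coeff], hdet_deg⟩


private lemma aux_coeff_sandwich {F : Type*} [Field F] {n k : ℕ}
    (πm : Matrix (Fin k) (Fin n) F) (M : Matrix (Fin n) (Fin n) F[X])
    (ιm : Matrix (Fin n) (Fin k) F) (r : ℕ) (i : Fin k) (j : Fin k) :
    ((πm.map C * M * ιm.map C) i j).coeff r =
      (πm * (Matrix.of fun a b => (M a b).coeff r) * ιm) i j := by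
  simp only [Matrix.mul_apply, Matrix.map_apply, Matrix.of_apply,
    Polynomial.finset_sum_coeff, Polynomial.coeff_mul_C, Polynomial.coeff_C_mul]

private lemma aux_span {F : Type*} [Field F] {n d : ℕ} (hn : 1 ≤ n) (hd : 1 ≤ d)
    (M : Matrix (Fin n) (Fin n) F[X])
    (hdegM : ∀ i j, (M i j).natDegree ≤ d)
    (hleadM : ∀ i j, (M i j).coeff d = if i = j then 1 else 0)
    (s : Finset F) (hcard : s.card = d * n)
    (hroot : ∀ x ∈ s, (M.det).IsRoot x) :
    Submodule.span F {v : Fin n → F | ∃ x ∈ s, M.map (Polynomial.eval x) *ᵥ v = 0} = ⊤ := by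
  set K : Set (Fin n → F) := {v : Fin n → F | ∃ x ∈ s, M.map (Polynomial.eval x) *ᵥ v = 0}
  by_contra hW
  set W : Submodule F (Fin n → F) := Submodule.span F K with hWdef
  have hWlt : W < ⊤ := lt_top_iff_ne_top.mpr hW
  set k : ℕ := Module.finrank F ↥W with hk
  have hkn : k < n := by
    have := Submodule.finrank_lt (K := F) hWlt.ne
    rwa [Module.finrank_fin_fun] at this
  -- ι and π
  set bW : Module.Basis (Fin k) F ↥W := Module.finBasis F ↥W
  set ιL : (Fin k → F) →ₗ[F] (Fin n → F) := W.subtype ∘ₗ (bW.equivFun.symm : _ ≃ₗ[F] _).toLinearMap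
    with hιL
  have hιinj : Function.Injective ιL := by
    intro x y hxy
    simp only [hιL, LinearMap.coe_comp, Function.comp_apply, Submodule.coe_subtype,
      LinearEquiv.coe_coe] at hxy
    exact bW.equivFun.symm.injective (Subtype.coe_injective hxy)
  obtain ⟨πL, hπι⟩ := LinearMap.exists_leftInverse_of_injective ιL (LinearMap.ker_eq_bot.mpr hιinj)
  set ιm : Matrix (Fin n) (Fin k) F := LinearMap.toMatrix' ιL
  set πm : Matrix (Fin k) (Fin n) F := LinearMap.toMatrix' πL
  have hπι' : πm * ιm = 1 := by
    rw [← LinearMap.toMatrix'_comp, hπι, LinearMap.toMatrix'_id]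
  set N : Matrix (Fin k) (Fin k) F[X] := πm.map C * M * ιm.map C with hN
  have hNdeg : ∀ i j, (N i j).natDegree ≤ d := by
    intro i j
    rw [Polynomial.natDegree_le_iff_coeff_eq_zero]
    intro r hr
    rw [hN, aux_coeff_sandwich]
    have : (Matrix.of fun a b => (M a b).coeff r) = (0 : Matrix (Fin n) (Fin n) F) := by
      ext a b
      exact Polynomial.coeff_eq_zero_of_natDegree_lt (lt_of_le_of_lt (hdegM a b) hr)
    rw [this, Matrix.mul_zero, Matrix.zero_mul, Matrix.zero_apply]
  have hNlead : ∀ i j, (N i j).coeff d = if i = j then 1 else 0 := by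
    intro i j
    rw [hN, aux_coeff_sandwich]
    have : (Matrix.of fun a b => (M a b).coeff d) = (1 : Matrix (Fin n) (Fin n) F) := by
      ext a b
      rw [Matrix.of_apply, hleadM a b, Matrix.one_apply]
    rw [this, Matrix.mul_one, hπι', Matrix.one_apply]
  obtain ⟨hNmonic, hNdegdet⟩ := aux_det_monic N hNdeg hNlead
  -- every x ∈ s is a root of N.det
  have hNroot : ∀ x ∈ s, (N.det).IsRoot x := by
    intro x hx
    obtain ⟨v, hv0, hv⟩ : ∃ v, v ≠ 0 ∧ M.map (Polynomial.eval x) *ᵥ v = 0 := by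
      rw [Matrix.exists_mulVec_eq_zero_iff]
      have := RingHom.map_det (Polynomial.evalRingHom x) M
      simp only [RingHom.mapMatrix_apply] at this
      rw [show (M.map ⇑(Polynomial.evalRingHom x)) = M.map (Polynomial.eval x) from rfl] at this
      rw [← this]
      exact hroot x hx
    have hvK : v ∈ K := ⟨x, hx, hv⟩
    have hvW : v ∈ W := Submodule.subset_span hvK
    -- v is in the range of ιL
    obtain ⟨u, hu⟩ : ∃ u, ιL u = v := by
      refine ⟨bW.equivFun ⟨v, hvW⟩, ?_⟩
      show (W.subtype ∘ₗ (bW.equivFun.symm : _ ≃ₗ[F] _).toLinearMap) _ = v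
      simp only [LinearMap.coe_comp, Function.comp_apply, LinearEquiv.coe_coe,
        LinearEquiv.symm_apply_apply, Submodule.coe_subtype]
    have hu0 : u ≠ 0 := by
      rintro rfl
      rw [map_zero] at hu
      exact hv0 hu.symm
    show Polynomial.eval x N.det = 0
    have hmapN : N.map (Polynomial.eval x) = πm * (M.map (Polynomial.eval x)) * ιm := by
      have e1 : (πm.map C * M * ιm.map C).map ⇑(Polynomial.evalRingHom x) =
          (πm.map C).map ⇑(Polynomial.evalRingHom x) * M.map ⇑(Polynomial.evalRingHom x) *
          (ιm.map C).map ⇑(Polynomial.evalRingHom x) := by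
        rw [Matrix.map_mul, Matrix.map_mul]
      have e2 : (πm.map C).map ⇑(Polynomial.evalRingHom x) = πm := by
        ext i j; simp [Matrix.map_apply]
      have e3 : (ιm.map C).map ⇑(Polynomial.evalRingHom x) = ιm := by
        ext i j; simp [Matrix.map_apply]
      rw [hN]
      rw [show Polynomial.eval x = ⇑(Polynomial.evalRingHom x) from rfl]
      rw [e1, e2, e3]
    have hdet0 : (N.map (Polynomial.eval x)).det = 0 := by
      rw [← Matrix.exists_mulVec_eq_zero_iff]
      refine ⟨u, hu0, ?_⟩
      rw [hmapN, ← Matrix.mulVec_mulVec, ← Matrix.mulVec_mulVec]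
      have : ιm *ᵥ u = v := by
        rw [← Matrix.toLin'_apply, Matrix.toLin'_toMatrix']
        exact hu
      rw [this, hv, Matrix.mulVec_zero]
    have := RingHom.map_det (Polynomial.evalRingHom x) N
    simp only [RingHom.mapMatrix_apply] at this
    rw [show Polynomial.eval x N.det = (Polynomial.evalRingHom x) N.det from rfl, this]
    exact hdet0
  -- contradiction via counting roots
  have hsub : s.val ≤ N.det.roots := by
    rw [Finset.val_le_iff_val_subset]
    intro x hx
    rw [Polynomial.mem_roots hNmonic.ne_zero]
    exact hNroot x (by exact hx)
  have hle : s.card ≤ N.det.natDegree := by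
    calc s.card = Multiset.card s.val := rfl
      _ ≤ Multiset.card N.det.roots := Multiset.card_le_card hsub
      _ ≤ N.det.natDegree := Polynomial.card_roots' _
  rw [hcard, hNdegdet] at hle
  have hlt2 : d * k < d * n := mul_lt_mul_of_pos_left hkn (by omega : 0 < d)
  omega


private lemma aux_sum_mulVec {F : Type*} [Field F] {n : ℕ} {ι : Type*} (s : Finset ι)
    (f : ι → Matrix (Fin n) (Fin n) F) (v : Fin n → F) :
    (∑ r ∈ s, f r) *ᵥ v = ∑ r ∈ s, f r *ᵥ v := by
  classical
  induction s using Finset.induction_on with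
  | empty => simp [Matrix.zero_mulVec]
  | insert _ _ h ih => rw [Finset.sum_insert h, Finset.sum_insert h, Matrix.add_mulVec, ih]

private lemma aux_key {F : Type*} [Field F] (n : ℕ) (hn : 1 ≤ n) :
    ∀ (m : ℕ) (P : Polynomial (Matrix (Fin n) (Fin n) F)), P.Monic → P.natDegree = m →
    (∃ s : Finset F, s.card = m * n ∧ ∀ x ∈ s, ((matPolyEquiv.symm P).det).IsRoot x) →
    ∃ C : Fin m → Matrix (Fin n) (Fin n) F,
      P = (List.ofFn fun i =>
        (X : Polynomial (Matrix (Fin n) (Fin n) F)) - Polynomial.C (C i)).prod := by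
  haveI : NeZero n := ⟨by omega⟩
  intro m
  induction m with
  | zero =>
    intro P hmonic hdeg _
    refine ⟨Fin.elim0, ?_⟩
    rw [hmonic.natDegree_eq_zero.mp hdeg]
    simp
  | succ m ih =>
    intro P hmonic hdeg hroots
    classical
    obtain ⟨s, hcard, hroot⟩ := hroots
    set M : Matrix (Fin n) (Fin n) F[X] := matPolyEquiv.symm P with hM
    have hMP : matPolyEquiv M = P := matPolyEquiv.apply_symm_apply P
    have hMc : ∀ (r : ℕ) (i j : Fin n), (M i j).coeff r = (P.coeff r) i j := by
      intro r i j
      rw [← matPolyEquiv_coeff_apply, hMP]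
    have hMdeg : ∀ i j, (M i j).natDegree ≤ m + 1 := by
      intro i j
      rw [Polynomial.natDegree_le_iff_coeff_eq_zero]
      intro r hr
      rw [hMc, Polynomial.coeff_eq_zero_of_natDegree_lt (by omega : P.natDegree < r)]
      rfl
    have hPlead : P.coeff (m + 1) = 1 := by
      have h := hmonic
      rw [Polynomial.Monic, Polynomial.leadingCoeff, hdeg] at h
      exact h
    have hMlead : ∀ i j, (M i j).coeff (m + 1) = if i = j then 1 else 0 := by
      intro i j
      rw [hMc, hPlead, Matrix.one_apply]
    have hspan := aux_span hn (by omega : 1 ≤ m + 1) M hMdeg hMlead s hcard hroot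
    obtain ⟨bs, hbsK, hbspan, hbind⟩ := exists_linearIndependent F
      {v : Fin n → F | ∃ x ∈ s, M.map (Polynomial.eval x) *ᵥ v = 0}
    rw [hspan] at hbspan
    haveI : Fintype ↥bs := hbind.setFinite.fintype
    let bb : Module.Basis ↥bs F (Fin n → F) :=
      Module.Basis.mk hbind (by rw [Subtype.range_coe, hbspan])
    have hbcard : Fintype.card ↥bs = n := by
      have h := Module.finrank_eq_card_basis bb
      rw [Module.finrank_fin_fun] at h
      exact h.symm
    let e : ↥bs ≃ Fin n := Fintype.equivFinOfCardEq hbcard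
    let B : Module.Basis (Fin n) F (Fin n → F) := bb.reindex e
    have hBK : ∀ i : Fin n, ∃ x, x ∈ s ∧ M.map (Polynomial.eval x) *ᵥ B i = 0 := by
      intro i
      have hmem : B i ∈ bs := by
        show (bb.reindex e) i ∈ bs
        rw [Module.Basis.reindex_apply, Module.Basis.mk_apply]
        exact (e.symm i).2
      obtain ⟨x, hx1, hx2⟩ := hbsK hmem
      exact ⟨x, hx1, hx2⟩
    choose lam hlam hlamv using hBK
    let T : (Fin n → F) →ₗ[F] (Fin n → F) := B.constr F (fun i => lam i • B i)
    let Cmat : Matrix (Fin n) (Fin n) F := LinearMap.toMatrix' T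
    have hCv : ∀ i, Cmat *ᵥ B i = lam i • B i := by
      intro i
      rw [show Cmat *ᵥ B i = Matrix.toLin' Cmat (B i) from (Matrix.toLin'_apply _ _).symm]
      rw [show Matrix.toLin' Cmat = T from Matrix.toLin'_toMatrix' T]
      exact B.constr_basis F _ i
    have hCpow : ∀ (r : ℕ) (i : Fin n), (Cmat ^ r) *ᵥ B i = lam i ^ r • B i := by
      intro r i
      induction r with
      | zero => simp [Matrix.one_mulVec]
      | succ r ihr =>
        rw [pow_succ, ← Matrix.mulVec_mulVec, hCv, Matrix.mulVec_smul, ihr,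
          smul_smul, ← pow_succ']
    have hMeval : ∀ x : F,
        M.map (Polynomial.eval x) = ∑ r ∈ Finset.range (m + 2), x ^ r • P.coeff r := by
      intro x
      ext i j
      rw [Matrix.map_apply, Polynomial.eval_eq_sum_range'
        (lt_of_le_of_lt (hMdeg i j) (by omega : m + 1 < m + 2)) x, Matrix.sum_apply]
      refine Finset.sum_congr rfl fun r _ => ?_
      rw [Matrix.smul_apply, hMc, smul_eq_mul, mul_comm]
    have hZ : (∑ r ∈ Finset.range (m + 2), P.coeff r * Cmat ^ r) = 0 := by
      have hz : ∀ i, (∑ r ∈ Finset.range (m + 2), P.coeff r * Cmat ^ r) *ᵥ B i = 0 := by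
        intro i
        rw [aux_sum_mulVec]
        have h1 : ∀ r ∈ Finset.range (m + 2),
            (P.coeff r * Cmat ^ r) *ᵥ B i = lam i ^ r • (P.coeff r *ᵥ B i) := by
          intro r _
          rw [← Matrix.mulVec_mulVec, hCpow, Matrix.mulVec_smul]
        rw [Finset.sum_congr rfl h1]
        have h2 : ∑ r ∈ Finset.range (m + 2), lam i ^ r • (P.coeff r *ᵥ B i) =
            (M.map (Polynomial.eval (lam i))) *ᵥ B i := by
          rw [hMeval (lam i), aux_sum_mulVec]
          refine Finset.sum_congr rfl fun r _ => ?_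
          rw [Matrix.smul_mulVec]
        rw [h2, hlamv]
      have htl : Matrix.toLin' (∑ r ∈ Finset.range (m + 2), P.coeff r * Cmat ^ r) = 0 := by
        apply B.ext
        intro i
        rw [Matrix.toLin'_apply, hz]
        rfl
      have := congrArg LinearMap.toMatrix' htl
      rwa [LinearMap.toMatrix'_toLin', map_zero] at this
    obtain ⟨Q, hQ⟩ := aux_right_div P Cmat
    have hsum : (P.sum fun r a => a * Cmat ^ r) = 0 := by
      rw [Polynomial.sum_over_range' P (fun r => by rw [zero_mul]) (m + 2) (by omega)]
      exact hZ
    have hfact : P = Q * (X - Polynomial.C Cmat) := by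
      rw [hQ, hsum, map_zero, add_zero]
    have hXC : (X - Polynomial.C Cmat).Monic := Polynomial.monic_X_sub_C Cmat
    have hQmonic : Q.Monic := by
      have h := Polynomial.leadingCoeff_mul_monic (p := Q) hXC
      rw [← hfact] at h
      rw [Polynomial.Monic, ← h]
      exact hmonic
    have hQdeg : Q.natDegree = m := by
      have h := Polynomial.Monic.natDegree_mul hQmonic hXC
      rw [← hfact, hdeg, Polynomial.natDegree_X_sub_C] at h
      omega
    have hchar : matPolyEquiv.symm (X - Polynomial.C Cmat) = Cmat.charmatrix := by
      apply matPolyEquiv.injective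
      rw [matPolyEquiv.apply_symm_apply, matPolyEquiv_charmatrix]
    have hdetfact : M.det = (matPolyEquiv.symm Q).det * Cmat.charmatrix.det := by
      rw [hM, hfact, _root_.map_mul, Matrix.det_mul, hchar]
    have hcharval : ∀ x : F, x ∉ Finset.image lam Finset.univ →
        Polynomial.eval x Cmat.charmatrix.det ≠ 0 := by
      intro x hx
      have hmap : Cmat.charmatrix.map (Polynomial.eval x) =
          Matrix.diagonal (fun _ => x) - Cmat := by
        ext i j
        simp only [Matrix.map_apply, Matrix.charmatrix_apply, Polynomial.eval_sub,
          Polynomial.eval_C, Matrix.sub_apply, Matrix.diagonal_apply]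
        split_ifs with h <;> simp
      have h1 : Matrix.toLin' (Matrix.diagonal (fun _ : Fin n => x) - Cmat) =
          x • LinearMap.id - T := by
        rw [map_sub]
        congr 1
        · have hd : Matrix.diagonal (fun _ : Fin n => x) =
              x • (1 : Matrix (Fin n) (Fin n) F) := by
            ext i j
            simp only [Matrix.diagonal_apply, Matrix.smul_apply, Matrix.one_apply, smul_eq_mul]
            split_ifs <;> simp
          rw [hd, _root_.map_smul, Matrix.toLin'_one]
        · exact Matrix.toLin'_toMatrix' T
      have hdiagmat : LinearMap.toMatrix B B (x • LinearMap.id - T) =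
          Matrix.diagonal (fun i => x - lam i) := by
        ext i j
        rw [LinearMap.toMatrix_apply]
        rw [LinearMap.sub_apply, LinearMap.smul_apply, LinearMap.id_apply]
        rw [show T (B j) = lam j • B j from B.constr_basis F _ j]
        rw [← sub_smul, _root_.map_smul, B.repr_self]
        rw [Finsupp.smul_apply, Finsupp.single_apply, Matrix.diagonal_apply]
        by_cases h : i = j
        · subst h; simp
        · simp [h, Ne.symm h]
      have hdiagdet : (Matrix.diagonal (fun _ : Fin n => x) - Cmat).det =
          ∏ i, (x - lam i) := by
        calc (Matrix.diagonal (fun _ : Fin n => x) - Cmat).det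
            = LinearMap.det (Matrix.toLin' (Matrix.diagonal (fun _ : Fin n => x) - Cmat)) :=
              (LinearMap.det_toLin' _).symm
          _ = LinearMap.det (x • LinearMap.id - T) := by rw [h1]
          _ = (LinearMap.toMatrix B B (x • LinearMap.id - T)).det :=
              (LinearMap.det_toMatrix B _).symm
          _ = (Matrix.diagonal (fun i => x - lam i)).det := by rw [hdiagmat]
          _ = ∏ i, (x - lam i) := Matrix.det_diagonal
      have heval : Polynomial.eval x Cmat.charmatrix.det = ∏ i, (x - lam i) := by
        have h := RingHom.map_det (Polynomial.evalRingHom x) Cmat.charmatrix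
        simp only [RingHom.mapMatrix_apply] at h
        rw [show Polynomial.eval x Cmat.charmatrix.det =
          (Polynomial.evalRingHom x) Cmat.charmatrix.det from rfl, h]
        rw [show Cmat.charmatrix.map ⇑(Polynomial.evalRingHom x) =
          Cmat.charmatrix.map (Polynomial.eval x) from rfl, hmap, hdiagdet]
      rw [heval]
      rw [Finset.prod_ne_zero_iff]
      intro i _
      intro heq
      apply hx
      rw [sub_eq_zero] at heq
      exact Finset.mem_image.mpr ⟨i, Finset.mem_univ i, heq.symm⟩
    have hsd : m * n ≤ (s \ Finset.image lam Finset.univ).card := by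
      have h1 : (Finset.image lam Finset.univ).card ≤ n :=
        le_trans Finset.card_image_le (by simp)
      have h2 := Finset.le_card_sdiff (Finset.image lam Finset.univ) s
      have h3 : (m + 1) * n = m * n + n := by ring
      omega
    obtain ⟨s', hs'sub, hs'card⟩ := Finset.exists_subset_card_eq hsd
    have hQroot : ∀ x ∈ s', ((matPolyEquiv.symm Q).det).IsRoot x := by
      intro x hx'
      have hxs := hs'sub hx'
      have hxs1 := (Finset.mem_sdiff.mp hxs).1
      have hxs2 := (Finset.mem_sdiff.mp hxs).2
      have h0 : Polynomial.eval x M.det = 0 := hroot x hxs1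
      rw [hdetfact, Polynomial.eval_mul] at h0
      rcases mul_eq_zero.mp h0 with h | h
      · exact h
      · exact absurd h (hcharval x hxs2)
    obtain ⟨C', hC'⟩ := ih Q hQmonic hQdeg ⟨s', hs'card, hQroot⟩
    refine ⟨Fin.snoc C' Cmat, ?_⟩
    rw [List.ofFn_succ', List.prod_concat]
    simp only [Fin.snoc_castSucc, Fin.snoc_last]
    rw [← hC', ← hfact]

end AuxStmt12

/-- Let `P` be a monic polynomial of degree `m` with coefficients in
`M(n, F)`.  If its determinant (a monic polynomial of degree `m·n` in `F[X]`, obtained via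
the canonical identification of matrix polynomials with polynomial matrices) has `m·n`
distinct roots in `F`, then `P` factors as a product of linear factors
`P = (X·I − C₁)(X·I − C₂)⋯(X·I − C_m)` with `C₁, …, C_m ∈ M(n, F)`. -/
theorem stmt12 {F : Type*} [Field F] (n m : ℕ) (hn : 1 ≤ n) (hm : 1 ≤ m)
    (P : Polynomial (Matrix (Fin n) (Fin n) F))
    (hmonic : P.Monic) (hdeg : P.natDegree = m)
    (hroots : ∃ s : Finset F, s.card = m * n ∧
      ∀ x ∈ s, ((matPolyEquiv.symm P).det).IsRoot x) :
    ∃ C : Fin m → Matrix (Fin n) (Fin n) F,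
      P = (List.ofFn fun i => (X : Polynomial (Matrix (Fin n) (Fin n) F)) - Polynomial.C (C i)).prod := by
  exact aux_key n hn m P hmonic hdeg hroots
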